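/- If the sequent Γ ⊃ Δ is derivable in the sequent calculus G, then Γ ⊢ ⋁Δ in natural deduction, where ⋁Δ is the right-nested disjunction of the formulas in Δ ending in ⊥. -/
import Mathlib


inductive PropF (V : Type) : Type
  | Var : V → PropF V
  | Bot : PropF V
  | Conj : PropF V → PropF V → PropF V
  | Disj : PropF V → PropF V → PropF V
  | Impl : PropF V → PropF V → PropF V
deriving DecidableEq

variable {V : Type} [DecidableEq V]

def PropF.Neg (A : PropF V) : PropF V := A.Impl .Bot
def PropF.Top : PropF V := PropF.Neg .Bot

def TrueQ (v : V → Bool) : PropF V → Bool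
  | .Var p => v p
  | .Bot => false
  | .Conj B C => TrueQ v B && TrueQ v C
  | .Disj B C => TrueQ v B || TrueQ v C
  | .Impl B C => !(TrueQ v B) || TrueQ v C

def Satisfies (v : V → Bool) (Γ : List (PropF V)) : Prop := ∀ A ∈ Γ, TrueQ v A = true
def Models (Γ : List (PropF V)) (A : PropF V) : Prop := ∀ v, Satisfies v Γ → TrueQ v A = true
def Valid (A : PropF V) : Prop := Models [] A
def Validates (v : V → Bool) (Δ : List (PropF V)) : Prop := ∃ A ∈ Δ, TrueQ v A = true

inductive Nc : List (PropF V) → PropF V → Prop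
  | Nax (Γ : List (PropF V)) (A : PropF V) : A ∈ Γ → Nc Γ A
  | ImpI (Γ : List (PropF V)) (A B : PropF V) : Nc (A :: Γ) B → Nc Γ (A.Impl B)
  | ImpE (Γ : List (PropF V)) (A B : PropF V) : Nc Γ (A.Impl B) → Nc Γ A → Nc Γ B
  | BotC (Γ : List (PropF V)) (A : PropF V) : Nc (A.Neg :: Γ) .Bot → Nc Γ A
  | AndI (Γ : List (PropF V)) (A B : PropF V) : Nc Γ A → Nc Γ B → Nc Γ (A.Conj B)
  | AndE1 (Γ : List (PropF V)) (A B : PropF V) : Nc Γ (A.Conj B) → Nc Γ A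
  | AndE2 (Γ : List (PropF V)) (A B : PropF V) : Nc Γ (A.Conj B) → Nc Γ B
  | OrI1 (Γ : List (PropF V)) (A B : PropF V) : Nc Γ A → Nc Γ (A.Disj B)
  | OrI2 (Γ : List (PropF V)) (A B : PropF V) : Nc Γ B → Nc Γ (A.Disj B)
  | OrE (Γ : List (PropF V)) (A B C : PropF V) : Nc Γ (A.Disj B) → Nc (A :: Γ) C → Nc (B :: Γ) C → Nc Γ C

def Provable (A : PropF V) : Prop := Nc [] A

inductive NNF (V : Type) : Type
  | NPos : V → NNF V
  | NNeg : V → NNF V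
  | NBot : NNF V
  | NTop : NNF V
  | NConj : NNF V → NNF V → NNF V
  | NDisj : NNF V → NNF V → NNF V
deriving DecidableEq

def NNFtoPropF : NNF V → PropF V
  | .NPos p => .Var p
  | .NNeg p => (PropF.Var p).Neg
  | .NBot => .Bot
  | .NTop => PropF.Top
  | .NConj B C => (NNFtoPropF B).Conj (NNFtoPropF C)
  | .NDisj B C => (NNFtoPropF B).Disj (NNFtoPropF C)

mutual
def MakeNNF : PropF V → NNF V
  | .Var p => .NPos p
  | .Bot => .NBot
  | .Disj B C => .NDisj (MakeNNF B) (MakeNNF C)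
  | .Conj B C => .NConj (MakeNNF B) (MakeNNF C)
  | .Impl B C => .NDisj (MakeNNFN B) (MakeNNF C)
def MakeNNFN : PropF V → NNF V
  | .Var p => .NNeg p
  | .Bot => .NTop
  | .Disj B C => .NConj (MakeNNFN B) (MakeNNFN C)
  | .Conj B C => .NDisj (MakeNNFN B) (MakeNNFN C)
  | .Impl B C => .NConj (MakeNNF B) (MakeNNFN C)
end

inductive Lit (V : Type) : Type
  | LPos : V → Lit V
  | LNeg : V → Lit V
  | LBot : Lit V
  | LTop : Lit V
deriving DecidableEq

def LiteraltoPropF : Lit V → PropF V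
  | .LPos p => .Var p
  | .LNeg p => (PropF.Var p).Neg
  | .LBot => .Bot
  | .LTop => PropF.Top

abbrev Clause (V : Type) : Type := List (Lit V)
abbrev CNF (V : Type) : Type := List (Clause V)

abbrev ClausetoPropF (l : Clause V) : PropF V :=
  l.foldr (fun a r => (LiteraltoPropF a).Disj r) .Bot

def CNFtoPropF (ll : CNF V) : PropF V :=
  ll.foldr (fun c r => (ClausetoPropF c).Conj r) PropF.Top

def AddClause (l : Clause V) (ll : CNF V) : CNF V := ll.map (fun l2 => l ++ l2)
def Disjunct (ll ll2 : CNF V) : CNF V := ll.flatMap (fun l => AddClause l ll2)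

def MakeCNF : NNF V → CNF V
  | .NPos p => [[.LPos p]]
  | .NNeg p => [[.LNeg p]]
  | .NBot => [[.LBot]]
  | .NTop => [[.LTop]]
  | .NConj B C => MakeCNF B ++ MakeCNF C
  | .NDisj B C => Disjunct (MakeCNF B) (MakeCNF C)

def Valid_Clause (l : Clause V) : Prop :=
  Lit.LTop ∈ l ∨ ∃ p, Lit.LPos p ∈ l ∧ Lit.LNeg p ∈ l
def Valid_CNF (ll : CNF V) : Prop := ∀ l ∈ ll, Valid_Clause l

inductive AxiomH : PropF V → Prop
  | HOrI1 (A B : PropF V) : AxiomH (A.Impl (A.Disj B))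
  | HOrI2 (A B : PropF V) : AxiomH (B.Impl (A.Disj B))
  | HAndI (A B : PropF V) : AxiomH (A.Impl (B.Impl (A.Conj B)))
  | HOrE (A B C : PropF V) : AxiomH ((A.Disj B).Impl ((A.Impl C).Impl ((B.Impl C).Impl C)))
  | HAndE1 (A B : PropF V) : AxiomH ((A.Conj B).Impl A)
  | HAndE2 (A B : PropF V) : AxiomH ((A.Conj B).Impl B)
  | HS (A B C : PropF V) : AxiomH ((A.Impl (B.Impl C)).Impl ((A.Impl B).Impl (A.Impl C)))
  | HK (A B : PropF V) : AxiomH (A.Impl (B.Impl A))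
  | HClas (A : PropF V) : AxiomH ((A.Neg.Neg).Impl A)

inductive Hc : List (PropF V) → PropF V → Prop
  | Hass (A : PropF V) (Γ : List (PropF V)) : A ∈ Γ → Hc Γ A
  | Hax (A : PropF V) (Γ : List (PropF V)) : AxiomH A → Hc Γ A
  | HImpE (Γ : List (PropF V)) (A B : PropF V) : Hc Γ (A.Impl B) → Hc Γ A → Hc Γ B

inductive G : List (PropF V) → List (PropF V) → Prop
  | Gax (A : PropF V) (Γ Δ : List (PropF V)) : A ∈ Γ → A ∈ Δ → G Γ Δ
  | GBot (Γ Δ : List (PropF V)) : PropF.Bot ∈ Γ → G Γ Δ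
  | AndL (A B : PropF V) (Γ1 Γ2 Δ : List (PropF V)) : G (Γ1 ++ A :: B :: Γ2) Δ → G (Γ1 ++ (A.Conj B) :: Γ2) Δ
  | AndR (A B : PropF V) (Γ Δ1 Δ2 : List (PropF V)) : G Γ (Δ1 ++ A :: Δ2) → G Γ (Δ1 ++ B :: Δ2) → G Γ (Δ1 ++ (A.Conj B) :: Δ2)
  | OrL (A B : PropF V) (Γ1 Γ2 Δ : List (PropF V)) : G (Γ1 ++ A :: Γ2) Δ → G (Γ1 ++ B :: Γ2) Δ → G (Γ1 ++ (A.Disj B) :: Γ2) Δ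
  | OrR (A B : PropF V) (Γ Δ1 Δ2 : List (PropF V)) : G Γ (Δ1 ++ A :: B :: Δ2) → G Γ (Δ1 ++ (A.Disj B) :: Δ2)
  | ImpL (A B : PropF V) (Γ1 Γ2 Δ : List (PropF V)) : G (Γ1 ++ B :: Γ2) Δ → G (Γ1 ++ Γ2) (A :: Δ) → G (Γ1 ++ (A.Impl B) :: Γ2) Δ
  | ImpR (A B : PropF V) (Γ Δ1 Δ2 : List (PropF V)) : G (A :: Γ) (Δ1 ++ B :: Δ2) → G Γ (Δ1 ++ (A.Impl B) :: Δ2)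
  | Cut (A : PropF V) (Γ Δ : List (PropF V)) : G Γ (A :: Δ) → G (A :: Γ) Δ → G Γ Δ

inductive Gcf : List (PropF V) → List (PropF V) → Prop
  | Gax (p : V) (Γ Δ : List (PropF V)) : PropF.Var p ∈ Γ → PropF.Var p ∈ Δ → Gcf Γ Δ
  | GBot (Γ Δ : List (PropF V)) : PropF.Bot ∈ Γ → Gcf Γ Δ
  | AndL (A B : PropF V) (Γ1 Γ2 Δ : List (PropF V)) : Gcf (Γ1 ++ A :: B :: Γ2) Δ → Gcf (Γ1 ++ (A.Conj B) :: Γ2) Δ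
  | AndR (A B : PropF V) (Γ Δ1 Δ2 : List (PropF V)) : Gcf Γ (Δ1 ++ A :: Δ2) → Gcf Γ (Δ1 ++ B :: Δ2) → Gcf Γ (Δ1 ++ (A.Conj B) :: Δ2)
  | OrL (A B : PropF V) (Γ1 Γ2 Δ : List (PropF V)) : Gcf (Γ1 ++ A :: Γ2) Δ → Gcf (Γ1 ++ B :: Γ2) Δ → Gcf (Γ1 ++ (A.Disj B) :: Γ2) Δ
  | OrR (A B : PropF V) (Γ Δ1 Δ2 : List (PropF V)) : Gcf Γ (Δ1 ++ A :: B :: Δ2) → Gcf Γ (Δ1 ++ (A.Disj B) :: Δ2)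
  | ImpL (A B : PropF V) (Γ1 Γ2 Δ : List (PropF V)) : Gcf (Γ1 ++ B :: Γ2) Δ → Gcf (Γ1 ++ Γ2) (A :: Δ) → Gcf (Γ1 ++ (A.Impl B) :: Γ2) Δ
  | ImpR (A B : PropF V) (Γ Δ1 Δ2 : List (PropF V)) : Gcf (A :: Γ) (Δ1 ++ B :: Δ2) → Gcf Γ (Δ1 ++ (A.Impl B) :: Δ2)

def BigOr (Δ : List (PropF V)) : PropF V := Δ.foldr PropF.Disj .Bot

def size : PropF V → Nat
  | .Var _ => 0
  | .Bot => 0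
  | .Conj B C => (size B + size C).succ
  | .Disj B C => (size B + size C).succ
  | .Impl B C => (size B + size C).succ

def sizel (Γ : List (PropF V)) : Nat := (Γ.map size).sum
def sizes (Γ Δ : List (PropF V)) : Nat := sizel Γ + sizel Δ

theorem Nc.weak {Γ : List (PropF V)} {A : PropF V} (h : Nc Γ A) :
    ∀ Γ', Γ ⊆ Γ' → Nc Γ' A := by
  induction h with
  | Nax Γ A hA => exact fun Γ' hs => Nc.Nax _ _ (hs hA)
  | ImpI Γ A B _ ih => exact fun Γ' hs => Nc.ImpI _ _ _ (ih _ (List.cons_subset_cons _ hs))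
  | ImpE Γ A B _ _ ih1 ih2 => exact fun Γ' hs => Nc.ImpE _ _ _ (ih1 _ hs) (ih2 _ hs)
  | BotC Γ A _ ih => exact fun Γ' hs => Nc.BotC _ _ (ih _ (List.cons_subset_cons _ hs))
  | AndI Γ A B _ _ ih1 ih2 => exact fun Γ' hs => Nc.AndI _ _ _ (ih1 _ hs) (ih2 _ hs)
  | AndE1 Γ A B _ ih => exact fun Γ' hs => Nc.AndE1 _ _ _ (ih _ hs)
  | AndE2 Γ A B _ ih => exact fun Γ' hs => Nc.AndE2 _ _ _ (ih _ hs)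
  | OrI1 Γ A B _ ih => exact fun Γ' hs => Nc.OrI1 _ _ _ (ih _ hs)
  | OrI2 Γ A B _ ih => exact fun Γ' hs => Nc.OrI2 _ _ _ (ih _ hs)
  | OrE Γ A B C _ _ _ ih1 ih2 ih3 =>
      exact fun Γ' hs => Nc.OrE _ _ _ _ (ih1 _ hs)
        (ih2 _ (List.cons_subset_cons _ hs)) (ih3 _ (List.cons_subset_cons _ hs))

theorem Nc.cut {Γ : List (PropF V)} {A C : PropF V}
    (h1 : Nc Γ A) (h2 : Nc (A :: Γ) C) : Nc Γ C :=
  Nc.ImpE _ _ _ (Nc.ImpI _ _ _ h2) h1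

theorem Nc.botE {Γ : List (PropF V)} (A : PropF V) (h : Nc Γ .Bot) : Nc Γ A :=
  Nc.BotC _ _ (h.weak _ (List.subset_cons_self _ _))

theorem Nc.em (Γ : List (PropF V)) (A : PropF V) : Nc Γ (A.Disj A.Neg) := by
  apply Nc.BotC
  apply Nc.ImpE _ (A.Disj A.Neg) _ (Nc.Nax _ _ (by simp [PropF.Neg]))
  apply Nc.OrI2
  apply Nc.ImpI
  apply Nc.ImpE _ (A.Disj A.Neg) _ (Nc.Nax _ _ (by simp [PropF.Neg]))
  exact Nc.OrI1 _ _ _ (Nc.Nax _ _ (by simp [PropF.Neg]))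

theorem Nc.orI {Γ Δ : List (PropF V)} {A : PropF V} (hA : A ∈ Δ)
    (h : Nc Γ A) : Nc Γ (BigOr Δ) := by
  induction Δ with
  | nil => cases hA
  | cons B Δ ih =>
      rcases List.mem_cons.mp hA with rfl | hA
      · exact Nc.OrI1 _ _ _ h
      · exact Nc.OrI2 _ _ _ (ih hA)

theorem Nc.orE {Γ : List (PropF V)} {C : PropF V} (Δ : List (PropF V))
    (h : Nc Γ (BigOr Δ)) (hcase : ∀ A ∈ Δ, Nc (A :: Γ) C) : Nc Γ C := by
  induction Δ generalizing Γ with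
  | nil => exact Nc.botE _ h
  | cons B Δ ih =>
      apply Nc.OrE _ B (BigOr Δ) _ h (hcase B (by simp [PropF.Neg]))
      apply ih (Nc.Nax _ _ (by simp [PropF.Neg]))
      intro A hA
      exact (hcase A (by simp [hA])).weak _ (by
        intro x hx; rcases List.mem_cons.mp hx with rfl | hx
        · simp
        · exact List.mem_cons_of_mem _ (List.mem_cons_of_mem _ hx))

theorem stmt12 {V : Type} [DecidableEq V] (Γ Δ : List (PropF V)) (h : G Γ Δ) :
    Nc Γ (BigOr Δ) := by
  induction h with
  | Gax A Γ Δ hΓ hΔ => exact Nc.orI hΔ (Nc.Nax _ _ hΓ)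
  | GBot Γ Δ hΓ => exact Nc.botE _ (Nc.Nax _ _ hΓ)
  | AndL A B Γ1 Γ2 Δ _ ih =>
      have hmem : (A.Conj B) ∈ Γ1 ++ (A.Conj B) :: Γ2 := by simp
      apply Nc.cut (Nc.AndE1 _ _ B (Nc.Nax _ _ hmem))
      apply Nc.cut (Nc.AndE2 _ A _ ((Nc.Nax _ _ hmem).weak _ (List.subset_cons_self _ _)))
      apply ih.weak
      intro x hx
      rcases List.mem_append.mp hx with h1 | h1
      · simp [h1]
      · rcases List.mem_cons.mp h1 with rfl | h1'
        · simp
        · rcases List.mem_cons.mp h1' with rfl | h1 <;> simp [h1]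
  | AndR A B Γ Δ1 Δ2 _ _ ih1 ih2 =>
      apply Nc.orE _ ih1
      intro X hX
      rcases List.mem_append.mp hX with h1 | h1
      · exact Nc.orI (A := X) (by simp [h1]) (Nc.Nax _ X (by simp))
      rcases List.mem_cons.mp h1 with rfl | h1
      swap
      · exact Nc.orI (A := X) (by simp [h1]) (Nc.Nax _ X (by simp))
      apply Nc.orE _ (ih2.weak _ (List.subset_cons_self _ _))
      intro Y hY
      rcases List.mem_append.mp hY with h1 | h1
      · exact Nc.orI (A := Y) (by simp [h1]) (Nc.Nax _ Y (by simp))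
      rcases List.mem_cons.mp h1 with rfl | h1
      swap
      · exact Nc.orI (A := Y) (by simp [h1]) (Nc.Nax _ Y (by simp))
      exact Nc.orI (show X.Conj Y ∈ _ by simp)
        (Nc.AndI _ _ _ (Nc.Nax _ _ (by simp [PropF.Neg])) (Nc.Nax _ _ (by simp [PropF.Neg])))
  | OrL A B Γ1 Γ2 Δ _ _ ih1 ih2 =>
      apply Nc.OrE _ A B _ (Nc.Nax _ (A.Disj B) (by simp [PropF.Neg]))
      · apply ih1.weak; intro x hx
        rcases List.mem_append.mp hx with h1 | h1
        · simp [h1]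
        · rcases List.mem_cons.mp h1 with rfl | h1 <;> simp [h1]
      · apply ih2.weak; intro x hx
        rcases List.mem_append.mp hx with h1 | h1
        · simp [h1]
        · rcases List.mem_cons.mp h1 with rfl | h1 <;> simp [h1]
  | OrR A B Γ Δ1 Δ2 _ ih =>
      apply Nc.orE _ ih
      intro X hX
      rcases List.mem_append.mp hX with h1 | h1
      · exact Nc.orI (A := X) (by simp [h1]) (Nc.Nax _ X (by simp))
      rcases List.mem_cons.mp h1 with rfl | h1'
      · exact Nc.orI (show X.Disj B ∈ _ by simp) (Nc.OrI1 _ _ _ (Nc.Nax _ _ (by simp)))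
      rcases List.mem_cons.mp h1' with rfl | h1
      · exact Nc.orI (show A.Disj X ∈ _ by simp) (Nc.OrI2 _ _ _ (Nc.Nax _ _ (by simp)))
      · exact Nc.orI (A := X) (by simp [h1]) (Nc.Nax _ X (by simp))
  | ImpL A B Γ1 Γ2 Δ _ _ ih1 ih2 =>
      have h2 : Nc (Γ1 ++ (A.Impl B) :: Γ2) (BigOr (A :: Δ)) := by
        apply ih2.weak; intro x hx
        rcases List.mem_append.mp hx with h1 | h1 <;> simp [h1]
      apply Nc.OrE _ A (BigOr Δ) _ h2
      · have hB : Nc (A :: Γ1 ++ (A.Impl B) :: Γ2) B :=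
          Nc.ImpE _ A _ (Nc.Nax _ _ (by simp [PropF.Neg])) (Nc.Nax _ _ (by simp [PropF.Neg]))
        apply Nc.cut hB
        apply ih1.weak; intro x hx
        rcases List.mem_append.mp hx with h1 | h1
        · simp [h1]
        · rcases List.mem_cons.mp h1 with rfl | h1 <;> simp [h1]
      · exact Nc.Nax _ _ (by simp [PropF.Neg])
  | ImpR A B Γ Δ1 Δ2 _ ih =>
      apply Nc.OrE _ A A.Neg _ (Nc.em Γ A)
      · apply Nc.orE _ (ih.weak _ (by simp [PropF.Neg]))
        intro X hX
        rcases List.mem_append.mp hX with h1 | h1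
        · exact Nc.orI (A := X) (by simp [h1]) (Nc.Nax _ X (by simp))
        rcases List.mem_cons.mp h1 with rfl | h1
        · exact Nc.orI (show A.Impl X ∈ _ by simp)
            (Nc.ImpI _ _ _ (Nc.Nax _ _ (by simp [PropF.Neg])))
        · exact Nc.orI (A := X) (by simp [h1]) (Nc.Nax _ X (by simp))
      · apply Nc.orI (show A.Impl B ∈ _ by simp)
        apply Nc.ImpI
        apply Nc.botE
        exact Nc.ImpE _ A _ (Nc.Nax _ _ (by simp [PropF.Neg])) (Nc.Nax _ _ (by simp [PropF.Neg]))
  | Cut A Γ Δ _ _ ih1 ih2 =>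
      apply Nc.OrE _ A (BigOr Δ) _ ih1 ih2
      exact Nc.Nax _ _ (by simp [PropF.Neg])
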